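/- Let G be a nontrivial finite group and let A = H/K be an abelian chief factor of G (i.e., H, K are normal in G, K < H, and H/K is a minimal normal subgroup of G/K which is abelian). Then A is non-Frattini (i.e., H/K is not contained in Frat(G/K)) if and only if A is complemented, meaning there exists a subgroup U of G with UH = G and U ∩ H = K. -/

import Mathlib

open scoped commutatorElement

/-- An abelian chief factor `H/K` of a nontrivial finite group `G` is non-Frattini
(i.e. `H/K` is not contained in `Frat(G/K)`) if and only if it is complemented
(there is a subgroup `U` with `U H = G` and `U ∩ H = K`). -/
theorem stmt_3 {G : Type*} [Group G] [Finite G] [Nontrivial G]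
    (H K : Subgroup G) [hHn : H.Normal] [hKn : K.Normal] (hKH : K < H)
    (hchief : ∀ N : Subgroup G, N.Normal → K ≤ N → N ≤ H → N = K ∨ N = H)
    (hab : ∀ a ∈ H, ∀ b ∈ H, ⁅a, b⁆ ∈ K) :
    ¬ H.map (QuotientGroup.mk' K) ≤ frattini (G ⧸ K) ↔
      ∃ U : Subgroup G, U ⊔ H = ⊤ ∧ U ⊓ H = K := by
  have hker : (QuotientGroup.mk' K).ker = K := QuotientGroup.ker_mk' K
  have hsurj : Function.Surjective (QuotientGroup.mk' K) :=
    QuotientGroup.mk'_surjective K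
  constructor
  · intro hnf
    -- find a maximal subgroup not containing the image of H
    have : ∃ M : Subgroup (G ⧸ K), IsCoatom M ∧ ¬ H.map (QuotientGroup.mk' K) ≤ M := by
      by_contra hc
      push_neg at hc
      exact hnf (le_iInf₂ fun M hM => hc M hM)
    obtain ⟨M, hM, hHM⟩ := this
    set U : Subgroup G := M.comap (QuotientGroup.mk' K) with hU
    have hKU : K ≤ U := by
      rw [← hker]; exact Subgroup.ker_le_comap _ _
    have hmapU : U.map (QuotientGroup.mk' K) = M :=
      Subgroup.map_comap_eq_self_of_surjective hsurj M
    -- U ⊔ H = ⊤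
    have hsup : U ⊔ H = ⊤ := by
      have h1 : M ⊔ H.map (QuotientGroup.mk' K) = ⊤ :=
        hM.2 _ (lt_of_le_of_ne le_sup_left (fun h => hHM (h ▸ le_sup_right)))
      have h2 : (U ⊔ H).map (QuotientGroup.mk' K) = ⊤ := by
        rw [Subgroup.map_sup, hmapU, h1]
      have h3 : (QuotientGroup.mk' K).ker ≤ U ⊔ H := by rw [hker]; exact hKU.trans le_sup_left
      calc U ⊔ H = ((U ⊔ H).map (QuotientGroup.mk' K)).comap (QuotientGroup.mk' K) :=
            (Subgroup.comap_map_eq_self h3).symm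
        _ = ⊤ := by rw [h2, Subgroup.comap_top]
    -- K ≤ U ⊓ H
    have hKUH : K ≤ U ⊓ H := le_inf hKU hKH.le
    -- U ⊓ H is normal
    have hnorm : (U ⊓ H).Normal := by
      have hUn : U ≤ Subgroup.normalizer ((U ⊓ H : Subgroup G) : Set G) := by
        intro u hu
        rw [Subgroup.mem_normalizer_iff]
        intro x
        constructor
        · rintro ⟨hx1, hx2⟩
          exact ⟨U.mul_mem (U.mul_mem hu hx1) (U.inv_mem hu), hHn.conj_mem x hx2 u⟩
        · rintro ⟨hx1, hx2⟩
          have h1 : u⁻¹ * (u * x * u⁻¹) * u⁻¹⁻¹ ∈ U ⊓ H :=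
            ⟨U.mul_mem (U.mul_mem (U.inv_mem hu) hx1) (U.inv_mem (U.inv_mem hu)),
             hHn.conj_mem _ hx2 u⁻¹⟩
          simpa [mul_assoc] using h1
      have hHle : ∀ h ∈ H, ∀ x ∈ U ⊓ H, h * x * h⁻¹ ∈ U ⊓ H := by
        intro h hh x hx
        have hcomm : ⁅h, x⁆ ∈ K := hab h hh x hx.2
        have : h * x * h⁻¹ = ⁅h, x⁆ * x := by
          group
        rw [this]
        exact Subgroup.mul_mem _ (hKUH hcomm) hx
      have hHn' : H ≤ Subgroup.normalizer ((U ⊓ H : Subgroup G) : Set G) := by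
        intro h hh
        rw [Subgroup.mem_normalizer_iff]
        intro x
        constructor
        · exact fun hx => hHle h hh x hx
        · intro hx
          have := hHle h⁻¹ (H.inv_mem hh) _ hx
          simpa [mul_assoc] using this
      have : Subgroup.normalizer ((U ⊓ H : Subgroup G) : Set G) = ⊤ := by
        rw [← top_le_iff, ← hsup]
        exact sup_le hUn hHn'
      exact Subgroup.normalizer_eq_top_iff.mp this
    refine ⟨U, hsup, ?_⟩
    rcases hchief (U ⊓ H) hnorm hKUH inf_le_right with h | h
    · exact h
    · exfalso
      apply hHM
      rw [← hmapU]
      exact Subgroup.map_mono (h ▸ inf_le_left : H ≤ U)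
  · rintro ⟨U, hsup, hinf⟩ hle
    have hKU : K ≤ U := hinf ▸ inf_le_left
    have hUtop : U.map (QuotientGroup.mk' K) ⊔ frattini (G ⧸ K) = ⊤ := by
      rw [← top_le_iff]
      calc (⊤ : Subgroup (G ⧸ K)) = (⊤ : Subgroup G).map (QuotientGroup.mk' K) := by
            rw [Subgroup.map_top_of_surjective _ hsurj]
        _ = U.map (QuotientGroup.mk' K) ⊔ H.map (QuotientGroup.mk' K) := by
            rw [← Subgroup.map_sup, hsup]
        _ ≤ U.map (QuotientGroup.mk' K) ⊔ frattini (G ⧸ K) := sup_le_sup_left hle _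
    have hU' : U.map (QuotientGroup.mk' K) = ⊤ := frattini_nongenerating hUtop
    have hUG : U = ⊤ := by
      have h3 : (QuotientGroup.mk' K).ker ≤ U := by rw [hker]; exact hKU
      calc U = (U.map (QuotientGroup.mk' K)).comap (QuotientGroup.mk' K) :=
            (Subgroup.comap_map_eq_self h3).symm
        _ = ⊤ := by rw [hU', Subgroup.comap_top]
    rw [hUG, top_inf_eq] at hinf
    exact hKH.ne' hinf
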